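/- In U(gl(2|1))[[t]] the deformed Cartan elements satisfy: [H₁, H₂] = −(1/4)(T − T')² H₁, [H₁, H₃] = (1/4)(T − T')² H₁, and [H₂, H₃] = 0. -/

import Mathlib

noncomputable section

namespace SuperJordanian

open scoped BigOperators

/-- The generalized binomial coefficient `C(1/2, n)`. -/
def cHalf (n : ℕ) : ℂ :=
  (∏ i ∈ Finset.range n, ((1 : ℂ) / 2 - (i : ℂ))) / (n.factorial : ℂ)

/-- Parity for `gl(2|1)`: `p(i,j) = 1` iff exactly one of `i`, `j` equals the third index. -/
def par (i j : Fin 3) : ℕ :=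
  if (i = 2 ∧ j ≠ 2) ∨ (i ≠ 2 ∧ j = 2) then 1 else 0

/-- The generator `e_{ij}` in the free algebra. -/
def gen (i j : Fin 3) : FreeAlgebra ℂ (Fin 3 × Fin 3) := FreeAlgebra.ι ℂ (i, j)

/-- Defining relations of the enveloping algebra `U(gl(2|1))`:
`e_{ij} e_{kl} - (-1)^{p(i,j)p(k,l)} e_{kl} e_{ij}
  = δ_{jk} e_{il} - (-1)^{p(i,j)p(k,l)} δ_{li} e_{kj}`. -/
inductive Rel : FreeAlgebra ℂ (Fin 3 × Fin 3) → FreeAlgebra ℂ (Fin 3 × Fin 3) → Prop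
  | mk (i j k l : Fin 3) :
      Rel (gen i j * gen k l - ((-1 : ℂ) ^ (par i j * par k l)) • (gen k l * gen i j))
        ((if j = k then gen i l else 0)
          - ((-1 : ℂ) ^ (par i j * par k l)) • (if l = i then gen k j else 0))

/-- The enveloping algebra `U = U(gl(2|1))`. -/
abbrev U : Type := RingQuot Rel

/-- The image of `e_{ij}` in `U`. -/
def e (i j : Fin 3) : U := RingQuot.mkAlgHom ℂ Rel (gen i j)

/-- The formal power series ring `U[[t]]`. -/
abbrev V : Type := PowerSeries U

/-- The central formal variable `t`. -/
def tv : V := PowerSeries.X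

/-- The inclusion `U → U[[t]]` as constant power series. -/
def C : U →+* V := PowerSeries.C

def e₁ : U := e 0 1
def f₁ : U := e 1 0
def h₁ : U := e 0 0 - e 1 1
def e₂ : U := e 1 2
def f₂ : U := e 2 1
def h₂ : U := e 1 1 + e 2 2
def e₃ : U := e 0 2
def f₃ : U := e 2 0
def h₃ : U := h₁ + h₂

/-- `s = Σ_{n ≥ 0} C(1/2, n) t^{2n} e₁^{2n}`, so that `s² = 1 + t² e₁²`. -/
def s : V := PowerSeries.mk fun m => if m % 2 = 0 then cHalf (m / 2) • (e₁ ^ m) else 0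

def T : V := tv * C e₁ + s
def T' : V := -(tv * C e₁) + s
def H₁ : V := s * C h₁
def F₁ : V := C f₁ - ((1 : ℂ) / 4) • (tv ^ 2 * C (e₁ * (h₁ ^ 2 - 1)))
def H₂ : V := C h₂ - ((1 : ℂ) / 2) • (tv ^ 2 * C (e₁ ^ 2 * h₁))
def E₂ : V := C e₂ - ((1 : ℂ) / 4) • (tv ^ 2 * C (e₁ * e₃ * (2 * h₁ + 1)))
def F₂ : V := C f₂
def H₃ : V := C h₃ + ((1 : ℂ) / 2) • (tv ^ 2 * C (e₁ ^ 2 * h₁))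
def E₃ : V := C e₃
def F₃ : V := C f₃ + ((1 : ℂ) / 4) • (tv ^ 2 * C (e₁ * f₂ * (2 * h₁ + 1)))

/-- Commutator `[a, b] = ab - ba`. -/
def br (a b : V) : V := a * b - b * a

/-- Anticommutator `{a, b} = ab + ba`. -/
def ac (a b : V) : V := a * b + b * a


lemma e_rel (i j k l : Fin 3) :
    e i j * e k l - ((-1 : ℂ) ^ (par i j * par k l)) • (e k l * e i j)
    = (if j = k then e i l else 0)
      - ((-1 : ℂ) ^ (par i j * par k l)) • (if l = i then e k j else 0) := by
  have h := RingQuot.mkAlgHom_rel ℂ (Rel.mk i j k l)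
  simpa [e, map_sub, map_mul, map_smul, apply_ite (RingQuot.mkAlgHom ℂ Rel)] using h

-- commutator for even pairs
lemma e_comm0 (i j k l : Fin 3) (h0 : par i j * par k l = 0) :
    e i j * e k l - e k l * e i j
    = (if j = k then e i l else 0) - (if l = i then e k j else 0) := by
  have h := e_rel i j k l
  rw [h0, pow_zero, one_smul, one_smul] at h
  exact h

example : True := trivial


lemma e_commute (i j k l : Fin 3) (h0 : par i j * par k l = 0)
    (hjk : j ≠ k) (hli : l ≠ i) : e i j * e k l = e k l * e i j := by
  have h := e_comm0 i j k l h0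
  rw [if_neg hjk, if_neg hli, sub_zero, sub_eq_zero] at h
  exact h

lemma e_comm_add (i j k l : Fin 3) (h0 : par i j * par k l = 0)
    (hjk : j = k) (hli : l ≠ i) : e i j * e k l = e k l * e i j + e i l := by
  have h := e_comm0 i j k l h0
  rw [if_pos hjk, if_neg hli, sub_zero, sub_eq_iff_eq_add] at h
  rw [h, add_comm]

lemma e_comm_sub (i j k l : Fin 3) (h0 : par i j * par k l = 0)
    (hjk : j ≠ k) (hli : l = i) : e i j * e k l = e k l * e i j - e k j := by
  have h := e_comm0 i j k l h0
  rw [if_neg hjk, if_pos hli, zero_sub, sub_eq_iff_eq_add] at h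
  rw [h]; abel

lemma h1_mul_e1 : h₁ * e₁ = e₁ * h₁ + 2 • e₁ := by
  have a1 : e 0 0 * e 0 1 = e 0 1 * e 0 0 + e 0 1 :=
    e_comm_add 0 0 0 1 (by decide) rfl (by decide)
  have a2 : e 1 1 * e 0 1 = e 0 1 * e 1 1 - e 0 1 :=
    e_comm_sub 1 1 0 1 (by decide) (by decide) rfl
  simp only [h₁, e₁, sub_mul, mul_sub, a1, a2, two_smul]
  abel

lemma e1_mul_h2 : e₁ * h₂ = h₂ * e₁ + e₁ := by
  have a1 : e 0 1 * e 1 1 = e 1 1 * e 0 1 + e 0 1 :=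
    e_comm_add 0 1 1 1 (by decide) rfl (by decide)
  have a2 : e 0 1 * e 2 2 = e 2 2 * e 0 1 :=
    e_commute 0 1 2 2 (by decide) (by decide) (by decide)
  simp only [h₂, e₁, mul_add, add_mul, a1, a2]
  abel

lemma h1_mul_h2 : h₁ * h₂ = h₂ * h₁ := by
  have a1 : e 0 0 * e 1 1 = e 1 1 * e 0 0 :=
    e_commute 0 0 1 1 (by decide) (by decide) (by decide)
  have a2 : e 0 0 * e 2 2 = e 2 2 * e 0 0 :=
    e_commute 0 0 2 2 (by decide) (by decide) (by decide)
  have a3 : e 1 1 * e 2 2 = e 2 2 * e 1 1 :=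
    e_commute 1 1 2 2 (by decide) (by decide) (by decide)
  simp only [h₁, h₂, sub_mul, mul_add, mul_sub, add_mul, a1, a2, a3]
  abel

lemma pow_e1_mul_h2 (m : ℕ) : e₁ ^ m * h₂ = h₂ * e₁ ^ m + m • e₁ ^ m := by
  induction m with
  | zero => simp
  | succ m ih =>
    have : e₁ ^ (m + 1) * h₂ = e₁ ^ m * (e₁ * h₂) := by
      rw [pow_succ, mul_assoc]
    rw [this, e1_mul_h2, mul_add, ← mul_assoc, ih, add_mul, smul_mul_assoc,
      ← pow_succ, mul_assoc h₂, ← pow_succ, succ_nsmul]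
    abel

lemma h1_mul_pow_e1 (m : ℕ) : h₁ * e₁ ^ m = e₁ ^ m * h₁ + (2 * m) • e₁ ^ m := by
  induction m with
  | zero => simp
  | succ m ih =>
    have : h₁ * e₁ ^ (m + 1) = (h₁ * e₁ ^ m) * e₁ := by
      rw [pow_succ, mul_assoc]
    rw [this, ih, add_mul, smul_mul_assoc, ← pow_succ, mul_assoc, h1_mul_e1,
      mul_add, ← mul_assoc, ← pow_succ, mul_smul_comm, ← pow_succ]
    rw [show 2 * (m + 1) = 2 * m + 2 by ring, add_nsmul]
    abel


/-- auxiliary series `D = Σ 2n c_n t^{2n} e₁^{2n}`. -/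
def Dv : V := PowerSeries.mk fun m => if m % 2 = 0 then ((m : ℂ) * cHalf (m / 2)) • e₁ ^ m else 0
/-- `A = t² e₁²`. -/
def Av : V := tv ^ 2 * C (e₁ ^ 2)

lemma cHalf_succ (k : ℕ) : cHalf (k + 1) = ((1/2 - (k:ℂ)) / ((k:ℂ) + 1)) * cHalf k := by
  have hf : ((k.factorial : ℂ)) ≠ 0 := Nat.cast_ne_zero.mpr k.factorial_ne_zero
  have hk : ((k:ℂ) + 1) ≠ 0 := Nat.cast_add_one_ne_zero k
  unfold cHalf
  rw [Finset.prod_range_succ, Nat.factorial_succ]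
  push_cast
  field_simp

lemma cHalf_rec (k : ℕ) : (2 * ((k:ℂ) + 1)) * cHalf (k + 1) = (1 - 2 * k) * cHalf k := by
  have hk : ((k:ℂ) + 1) ≠ 0 := Nat.cast_add_one_ne_zero k
  rw [cHalf_succ]
  field_simp

lemma coeff_s (n : ℕ) :
    PowerSeries.coeff n s = if n % 2 = 0 then cHalf (n / 2) • e₁ ^ n else 0 :=
  PowerSeries.coeff_mk _ _

lemma coeff_Dv (n : ℕ) :
    PowerSeries.coeff n Dv = if n % 2 = 0 then ((n : ℂ) * cHalf (n / 2)) • e₁ ^ n else 0 :=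
  PowerSeries.coeff_mk _ _

lemma nsmul_eq_csmul (n : ℕ) (x : U) : n • x = ((n:ℂ)) • x :=
  (Nat.cast_smul_eq_nsmul ℂ n x).symm

lemma F1v : C h₁ * C h₂ = C h₂ * C h₁ := by
  rw [← map_mul, ← map_mul, h1_mul_h2]

lemma F2v : s * C h₂ = C h₂ * s + Dv := by
  ext n
  rw [map_add, C, PowerSeries.coeff_mul_C, PowerSeries.coeff_C_mul, coeff_s, coeff_Dv]
  by_cases hn : n % 2 = 0
  · rw [if_pos hn, if_pos hn, smul_mul_assoc, pow_e1_mul_h2, nsmul_eq_csmul,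
      mul_smul_comm, smul_add, smul_smul, mul_comm]
  · rw [if_neg hn, if_neg hn, zero_mul, mul_zero, add_zero]

lemma F3v : C h₁ * s = s * C h₁ + (2:ℂ) • Dv := by
  ext n
  rw [map_add, PowerSeries.coeff_smul, C, PowerSeries.coeff_mul_C,
    PowerSeries.coeff_C_mul, coeff_s, coeff_Dv]
  by_cases hn : n % 2 = 0
  · rw [if_pos hn, if_pos hn, mul_smul_comm, h1_mul_pow_e1, nsmul_eq_csmul,
      smul_mul_assoc, smul_add, smul_smul, smul_smul]
    congr 1
    push_cast
    ring
  · rw [if_neg hn, if_neg hn, zero_mul, mul_zero, smul_zero, add_zero]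

lemma s_comm_C (u : U) (hu : ∀ m : ℕ, e₁ ^ m * u = u * e₁ ^ m) : s * C u = C u * s := by
  ext n
  rw [C, PowerSeries.coeff_mul_C, PowerSeries.coeff_C_mul, coeff_s]
  by_cases hn : n % 2 = 0
  · rw [if_pos hn, smul_mul_assoc, hu, mul_smul_comm]
  · rw [if_neg hn, zero_mul, mul_zero]

lemma e1pow_comm (m : ℕ) : e₁ ^ m * e₁ ^ 2 = e₁ ^ 2 * e₁ ^ m := by
  rw [← pow_add, ← pow_add, add_comm]

lemma X2_comm (f : V) : tv ^ 2 * f = f * tv ^ 2 :=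
  ((PowerSeries.commute_X f).pow_right 2).eq.symm

lemma ASv : Av * s = s * Av := by
  rw [Av, mul_assoc, ← s_comm_C _ e1pow_comm,
    show tv ^ 2 * (s * C (e₁ ^ 2)) = (tv ^ 2 * s) * C (e₁ ^ 2) from (mul_assoc _ _ _).symm,
    X2_comm s, mul_assoc]

lemma Dv_comm_C2 : Dv * C (e₁ ^ 2) = C (e₁ ^ 2) * Dv := by
  ext n
  rw [C, PowerSeries.coeff_mul_C, PowerSeries.coeff_C_mul, coeff_Dv]
  by_cases hn : n % 2 = 0
  · rw [if_pos hn, smul_mul_assoc, e1pow_comm, mul_smul_comm]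
  · rw [if_neg hn, zero_mul, mul_zero]

lemma C_smul (c : ℂ) (u : U) : C (c • u) = c • C u := by
  ext n
  rw [PowerSeries.coeff_smul, C, PowerSeries.coeff_C, PowerSeries.coeff_C]
  split_ifs <;> simp

lemma F4v : Dv + Av * Dv = s * Av := by
  have h1 : Av * Dv = tv ^ 2 * (C (e₁ ^ 2) * Dv) := by rw [Av, mul_assoc]
  have h2 : s * Av = tv ^ 2 * (s * C (e₁ ^ 2)) := by
    rw [Av, show s * (tv ^ 2 * C (e₁ ^ 2)) = (s * tv ^ 2) * C (e₁ ^ 2) from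
      (mul_assoc _ _ _).symm, ← X2_comm s, mul_assoc]
  rw [h1, h2]
  ext n
  rw [map_add, show tv = PowerSeries.X from rfl, PowerSeries.coeff_X_pow_mul',
    PowerSeries.coeff_X_pow_mul']
  by_cases hl : 2 ≤ n
  · rw [if_pos hl, if_pos hl, C, PowerSeries.coeff_C_mul,
      PowerSeries.coeff_mul_C, coeff_Dv, coeff_Dv, coeff_s]
    by_cases hn : n % 2 = 0
    · obtain ⟨k, rfl⟩ : ∃ k, n = 2 * k + 2 := ⟨n / 2 - 1, by omega⟩
      rw [if_pos hn, if_pos (by omega : (2 * k + 2 - 2) % 2 = 0),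
        if_pos (by omega : (2 * k + 2 - 2) % 2 = 0),
        show (2 * k + 2) / 2 = k + 1 by omega,
        show 2 * k + 2 - 2 = 2 * k by omega,
        show (2 * k) / 2 = k by omega,
        mul_smul_comm, smul_mul_assoc,
        show e₁ ^ 2 * e₁ ^ (2 * k) = e₁ ^ (2 * k + 2) by rw [← pow_add, add_comm],
        show e₁ ^ (2 * k) * e₁ ^ 2 = e₁ ^ (2 * k + 2) by rw [← pow_add],
        ← add_smul]
      congr 1
      have hrec := cHalf_rec k
      push_cast
      linear_combination hrec
    · rw [if_neg hn, if_neg (by omega : ¬(n - 2) % 2 = 0),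
        if_neg (by omega : ¬(n - 2) % 2 = 0), mul_zero, zero_mul, add_zero]
  · rw [if_neg hl, if_neg hl, coeff_Dv, add_zero]
    interval_cases n
    · norm_num
    · norm_num

lemma F6v : C h₁ * Av = Av * C h₁ + (4:ℂ) • Av := by
  have hU : h₁ * e₁ ^ 2 = e₁ ^ 2 * h₁ + (4:ℂ) • e₁ ^ 2 := by
    have h := h1_mul_pow_e1 2
    rw [nsmul_eq_csmul] at h
    norm_num at h
    exact h
  calc C h₁ * Av = (C h₁ * tv ^ 2) * C (e₁ ^ 2) := by rw [Av, mul_assoc]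
    _ = tv ^ 2 * (C h₁ * C (e₁ ^ 2)) := by rw [← X2_comm (C h₁), mul_assoc]
    _ = tv ^ 2 * C (h₁ * e₁ ^ 2) := by rw [map_mul]
    _ = tv ^ 2 * (C (e₁ ^ 2) * C h₁) + (4:ℂ) • (tv ^ 2 * C (e₁ ^ 2)) := by
        rw [hU, map_add, map_mul, C_smul, mul_add, mul_smul_comm]
    _ = Av * C h₁ + (4:ℂ) • Av := by rw [Av, mul_assoc]

lemma F7v : C h₂ * Av = Av * C h₂ - (2:ℂ) • Av := by
  have hU : h₂ * e₁ ^ 2 = e₁ ^ 2 * h₂ - (2:ℂ) • e₁ ^ 2 := by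
    have h := pow_e1_mul_h2 2
    rw [nsmul_eq_csmul] at h
    norm_num at h
    rw [eq_sub_iff_add_eq]
    exact h.symm
  calc C h₂ * Av = (C h₂ * tv ^ 2) * C (e₁ ^ 2) := by rw [Av, mul_assoc]
    _ = tv ^ 2 * (C h₂ * C (e₁ ^ 2)) := by rw [← X2_comm (C h₂), mul_assoc]
    _ = tv ^ 2 * C (h₂ * e₁ ^ 2) := by rw [map_mul]
    _ = tv ^ 2 * (C (e₁ ^ 2) * C h₂) - (2:ℂ) • (tv ^ 2 * C (e₁ ^ 2)) := by
        rw [hU, map_sub, map_mul, C_smul, mul_sub, mul_smul_comm]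
    _ = Av * C h₂ - (2:ℂ) • Av := by rw [Av, mul_assoc]


lemma key1 {R : Type*} [Ring R] [Algebra ℂ R] (S D A x y : R)
    (f1 : x * y = y * x)
    (f2 : S * y = y * S + D)
    (f3 : x * S = S * x + (2:ℂ) • D)
    (f4 : D + A * D = S * A)
    (f6 : x * A = A * x + (4:ℂ) • A)
    (fAS : A * S = S * A) :
    (S * x) * (y - ((1:ℂ)/2) • (A * x)) - (y - ((1:ℂ)/2) • (A * x)) * (S * x)
      = -(A * (S * x)) := by
  have hxy : S * (x * y) = y * (S * x) + D * x := by
    rw [f1, ← mul_assoc, f2, add_mul, mul_assoc]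
  have hb : S * (x * (A * x)) = S * (A * (x * x)) + (4:ℂ) • (S * (A * x)) := by
    rw [show x * (A * x) = (x * A) * x from (mul_assoc _ _ _).symm, f6, add_mul,
      smul_mul_assoc, mul_add, mul_smul_comm, mul_assoc]
  have hc : A * (x * (S * x)) = A * (S * (x * x)) + (2:ℂ) • (A * (D * x)) := by
    rw [show x * (S * x) = (x * S) * x from (mul_assoc _ _ _).symm, f3, add_mul,
      smul_mul_assoc, mul_add, mul_smul_comm, mul_assoc]
  have hd' : A * (D * x) = S * (A * x) - D * x := by
    rw [eq_sub_iff_add_eq, add_comm, ← mul_assoc, ← mul_assoc, ← add_mul, f4, mul_assoc]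
  have he : A * (S * (x * x)) = S * (A * (x * x)) := by
    rw [← mul_assoc, fAS, mul_assoc]
  have hf : A * (S * x) = S * (A * x) := by
    rw [← mul_assoc, fAS, mul_assoc]
  simp only [mul_sub, sub_mul, smul_mul_assoc, mul_smul_comm, mul_assoc]
  rw [hxy, hb, hc, hd', he, hf]
  module

lemma key2 {R : Type*} [Ring R] [Algebra ℂ R] (S D A x y : R)
    (f1 : x * y = y * x)
    (f2 : S * y = y * S + D)
    (f3 : x * S = S * x + (2:ℂ) • D)
    (f4 : D + A * D = S * A)
    (f6 : x * A = A * x + (4:ℂ) • A)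
    (fAS : A * S = S * A) :
    (S * x) * ((x + y) + ((1:ℂ)/2) • (A * x)) - ((x + y) + ((1:ℂ)/2) • (A * x)) * (S * x)
      = A * (S * x) := by
  have hxy : S * (x * y) = y * (S * x) + D * x := by
    rw [f1, ← mul_assoc, f2, add_mul, mul_assoc]
  have hxx : x * (S * x) = S * (x * x) + (2:ℂ) • (D * x) := by
    rw [← mul_assoc, f3, add_mul, smul_mul_assoc, mul_assoc]
  have hb : S * (x * (A * x)) = S * (A * (x * x)) + (4:ℂ) • (S * (A * x)) := by
    rw [show x * (A * x) = (x * A) * x from (mul_assoc _ _ _).symm, f6, add_mul,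
      smul_mul_assoc, mul_add, mul_smul_comm, mul_assoc]
  have hd' : A * (D * x) = S * (A * x) - D * x := by
    rw [eq_sub_iff_add_eq, add_comm, ← mul_assoc, ← mul_assoc, ← add_mul, f4, mul_assoc]
  have he : A * (S * (x * x)) = S * (A * (x * x)) := by
    rw [← mul_assoc, fAS, mul_assoc]
  have hf : A * (S * x) = S * (A * x) := by
    rw [← mul_assoc, fAS, mul_assoc]
  simp only [mul_add, add_mul, mul_sub, sub_mul, smul_mul_assoc, mul_smul_comm, mul_assoc]
  rw [hxy, hxx, hb]
  simp only [mul_add, mul_smul_comm]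
  rw [he, hd', hf]
  module

lemma key3 {R : Type*} [Ring R] [Algebra ℂ R] (A x y : R)
    (f1 : x * y = y * x)
    (f6 : x * A = A * x + (4:ℂ) • A)
    (f7 : y * A = A * y - (2:ℂ) • A) :
    (y - ((1:ℂ)/2) • (A * x)) * ((x + y) + ((1:ℂ)/2) • (A * x))
      - ((x + y) + ((1:ℂ)/2) • (A * x)) * (y - ((1:ℂ)/2) • (A * x)) = 0 := by
  have h1 : y * (A * x) = A * (x * y) - (2:ℂ) • (A * x) := by
    rw [← mul_assoc, f7, sub_mul, smul_mul_assoc, mul_assoc, f1]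
  have h3 : x * (A * x) = A * (x * x) + (4:ℂ) • (A * x) := by
    rw [← mul_assoc, f6, add_mul, smul_mul_assoc, mul_assoc]
  simp only [mul_add, add_mul, mul_sub, sub_mul, smul_mul_assoc, mul_smul_comm, mul_assoc]
  rw [h1, h3, f1]
  simp only [mul_add, mul_sub, mul_smul_comm]
  module

lemma H2_eq : H₂ = C h₂ - ((1:ℂ)/2) • (Av * C h₁) := by
  rw [H₂, Av, mul_assoc, ← map_mul]

lemma H3_eq : H₃ = (C h₁ + C h₂) + ((1:ℂ)/2) • (Av * C h₁) := by
  rw [H₃, Av, mul_assoc, ← map_mul, h₃, map_add]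

lemma TT4 : ((1:ℂ)/4) • ((T - T') ^ 2 * H₁) = Av * (s * C h₁) := by
  have hTT : T - T' = tv * C e₁ + tv * C e₁ := by rw [T, T']; abel
  have hXC : C e₁ * tv = tv * C e₁ := (PowerSeries.commute_X (C e₁)).eq
  have haa : (tv * C e₁) * (tv * C e₁) = Av := by
    rw [mul_assoc, ← mul_assoc (C e₁), hXC, mul_assoc, ← mul_assoc, ← map_mul,
      ← pow_two, ← pow_two, Av]
  rw [hTT, pow_two, add_mul, mul_add, haa, show H₁ = s * C h₁ from rfl]
  simp only [add_mul]
  module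


/-- commutators of the deformed Cartan elements in `U(gl(2|1))[[t]]`. -/
theorem statement1 :
    br H₁ H₂ = -(((1 : ℂ) / 4) • ((T - T') ^ 2 * H₁)) ∧
    br H₁ H₃ = ((1 : ℂ) / 4) • ((T - T') ^ 2 * H₁) ∧
    br H₂ H₃ = 0 := by
  refine ⟨?_, ?_, ?_⟩
  · rw [br, H2_eq, TT4]
    exact key1 s Dv Av (C h₁) (C h₂) F1v F2v F3v F4v F6v ASv
  · rw [br, H3_eq, TT4]
    exact key2 s Dv Av (C h₁) (C h₂) F1v F2v F3v F4v F6v ASv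
  · rw [br, H2_eq, H3_eq]
    exact key3 Av (C h₁) (C h₂) F1v F6v F7v

end SuperJordanian
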